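/- For any bounded operator X on a complex Hilbert space, w(X) ≤ (1/2)(‖X‖ + ‖X²‖^{1/2}). -/

import Mathlib

open scoped InnerProductSpace

/-- Numerical radius of a bounded operator on a complex Hilbert space. -/
noncomputable def numRad {H : Type*} [NormedAddCommGroup H] [InnerProductSpace ℂ H]
    (T : H →L[ℂ] H) : ℝ :=
  ⨆ z : {z : H // ‖z‖ = 1}, ‖(⟪T z.1, z.1⟫_ℂ : ℂ)‖

/-- Crawford number. -/
noncomputable def crawford {H : Type*} [NormedAddCommGroup H] [InnerProductSpace ℂ H]
    (T : H →L[ℂ] H) : ℝ :=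
  ⨅ z : {z : H // ‖z‖ = 1}, ‖(⟪T z.1, z.1⟫_ℂ : ℂ)‖

/-- The 2×2 block operator matrix `[[A, B], [C, D]]` acting on `H ⊕ H`
(the ℓ² direct sum `WithLp 2 (H × H)`), sending `(x, y)` to `(Ax + By, Cx + Dy)`. -/
noncomputable def blk {H : Type*} [NormedAddCommGroup H] [InnerProductSpace ℂ H]
    (A B C D : H →L[ℂ] H) : WithLp 2 (H × H) →L[ℂ] WithLp 2 (H × H) :=
  (((WithLp.prodContinuousLinearEquiv 2 ℂ H H).symm.toContinuousLinearMap).comp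
    (((A.comp (ContinuousLinearMap.fst ℂ H H) + B.comp (ContinuousLinearMap.snd ℂ H H)).prod
      (C.comp (ContinuousLinearMap.fst ℂ H H) + D.comp (ContinuousLinearMap.snd ℂ H H))))).comp
    ((WithLp.prodContinuousLinearEquiv 2 ℂ H H).toContinuousLinearMap)

/-- Buzano's inequality. -/
lemma buzano_aux {H : Type*} [NormedAddCommGroup H] [InnerProductSpace ℂ H]
    (e x y : H) (he : ‖e‖ = 1) :
    2 * ‖(⟪x, e⟫_ℂ : ℂ) * ⟪e, y⟫_ℂ‖ ≤ ‖x‖ * ‖y‖ + ‖(⟪x, y⟫_ℂ : ℂ)‖ := by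
  set c : ℂ := 2 * ⟪e, y⟫_ℂ with hc
  have key : (2 : ℂ) * (⟪x, e⟫_ℂ * ⟪e, y⟫_ℂ) - ⟪x, y⟫_ℂ = ⟪x, c • e - y⟫_ℂ := by
    rw [inner_sub_right, inner_smul_right, hc]; ring
  have hnorm : ‖c • e - y‖ = ‖y‖ := by
    have h2 : ‖c • e - y‖ ^ 2 = ‖y‖ ^ 2 := by
      rw [norm_sub_sq (𝕜 := ℂ), inner_smul_left, norm_smul, he, hc]
      have harg : (starRingEnd ℂ) (2 * ⟪e, y⟫_ℂ) * ⟪e, y⟫_ℂ =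
          ((2 * ‖(⟪e, y⟫_ℂ : ℂ)‖ ^ 2 : ℝ) : ℂ) := by
        rw [map_mul, mul_assoc, RCLike.conj_mul, map_ofNat, ← Complex.coe_algebraMap]
        push_cast
        ring
      have h34 : RCLike.re ((starRingEnd ℂ) (2 * ⟪e, y⟫_ℂ) * ⟪e, y⟫_ℂ) =
          2 * ‖(⟪e, y⟫_ℂ : ℂ)‖ ^ 2 := by
        rw [harg]
        simp [← Complex.ofReal_pow]
      rw [h34]
      have h5 : ‖(2 : ℂ) * ⟪e, y⟫_ℂ‖ = 2 * ‖(⟪e, y⟫_ℂ : ℂ)‖ := by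
        rw [norm_mul]
        norm_num
      rw [h5]
      ring
    have h1 : (0:ℝ) ≤ ‖c • e - y‖ := norm_nonneg _
    have h2' : (0:ℝ) ≤ ‖y‖ := norm_nonneg _
    nlinarith
  calc 2 * ‖(⟪x, e⟫_ℂ : ℂ) * ⟪e, y⟫_ℂ‖
      = ‖(2 : ℂ) * (⟪x, e⟫_ℂ * ⟪e, y⟫_ℂ)‖ := by
        rw [norm_mul]; norm_num
    _ = ‖((2 : ℂ) * (⟪x, e⟫_ℂ * ⟪e, y⟫_ℂ) - ⟪x, y⟫_ℂ) + ⟪x, y⟫_ℂ‖ := by ring_nf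
    _ ≤ ‖(2 : ℂ) * (⟪x, e⟫_ℂ * ⟪e, y⟫_ℂ) - ⟪x, y⟫_ℂ‖ + ‖(⟪x, y⟫_ℂ : ℂ)‖ := norm_add_le _ _
    _ ≤ ‖x‖ * ‖y‖ + ‖(⟪x, y⟫_ℂ : ℂ)‖ := by
        rw [key, ← hnorm]
        exact add_le_add (norm_inner_le_norm (𝕜 := ℂ) x _) le_rfl

set_option maxHeartbeats 1600000 in
theorem numRad_le_half_norm_add_sqrt_norm_sq {H : Type*} [NormedAddCommGroup H]
    [InnerProductSpace ℂ H] [CompleteSpace H] (X : H →L[ℂ] H) :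
    numRad X ≤ (1 / 2) * (‖X‖ + Real.sqrt ‖X * X‖) := by
  set a : ℝ := ‖X‖ with ha
  set b : ℝ := ‖X * X‖ with hb
  have ha0 : 0 ≤ a := norm_nonneg _
  have hb0 : 0 ≤ b := norm_nonneg _
  set s : ℝ := Real.sqrt b with hs
  have hs0 : 0 ≤ s := Real.sqrt_nonneg _
  have hs2 : s ^ 2 = b := Real.sq_sqrt hb0
  have hsa : s ≤ a := by
    have hba : b ≤ a * a := norm_mul_le X X
    have : s ≤ Real.sqrt (a * a) := Real.sqrt_le_sqrt hba
    rwa [Real.sqrt_mul_self ha0] at this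
  have key : ∀ z : H, ‖z‖ = 1 → ‖(⟪X z, z⟫_ℂ : ℂ)‖ ≤ (1 / 2) * (a + s) := by
    intro z hz
    set A' : H →L[ℂ] H := ContinuousLinearMap.adjoint X with hA'
    have hA'norm : ‖A'‖ = a := LinearIsometryEquiv.norm_map ContinuousLinearMap.adjoint X
    set p : ℝ := ‖X z‖ with hp
    set q : ℝ := ‖A' z‖ with hq
    set l : ℝ := ‖(⟪X z, z⟫_ℂ : ℂ)‖ with hl
    have hl0 : 0 ≤ l := norm_nonneg _
    have hp0 : 0 ≤ p := norm_nonneg _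
    have hq0 : 0 ≤ q := norm_nonneg _
    set μ : ℂ := ⟪z, X z⟫_ℂ with hμ
    have hlμ : ‖μ‖ = l := by
      rw [hμ, hl]
      exact norm_inner_symm z (X z)
    have hzz : (⟪z, z⟫_ℂ : ℂ) = 1 := by
      rw [inner_self_eq_norm_sq_to_K, hz]; norm_num
    have hAz : (⟪A' z, z⟫_ℂ : ℂ) = μ := by
      rw [hA', ContinuousLinearMap.adjoint_inner_left]
    -- step A : 2 p q ≤ a^2 + b
    have stepA : 2 * (p * q) ≤ a * a + b := by
      rcases eq_or_ne p 0 with hp' | hp'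
      · rw [hp']; nlinarith
      rcases eq_or_ne q 0 with hq' | hq'
      · rw [hq']; nlinarith
      · set ζ : H := (p⁻¹ : ℂ) • X z with hζ
        set η : H := (q⁻¹ : ℂ) • A' z with hη
        have hζ1 : ‖ζ‖ = 1 := by
          rw [hζ, norm_smul, norm_inv, Complex.norm_real, Real.norm_of_nonneg hp0, ← hp]
          field_simp
        have hη1 : ‖η‖ = 1 := by
          rw [hη, norm_smul, norm_inv, Complex.norm_real, Real.norm_of_nonneg hq0, ← hq]
          field_simp
        have hpc : (p : ℂ) ≠ 0 := by exact_mod_cast hp'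
        have hqc : (q : ℂ) ≠ 0 := by exact_mod_cast hq'
        have hx1 : (⟪A' ζ, z⟫_ℂ : ℂ) = (p : ℂ) := by
          rw [hA', ContinuousLinearMap.adjoint_inner_left, hζ, inner_smul_left,
            inner_self_eq_norm_sq_to_K]
          rw [map_inv₀, Complex.conj_ofReal, ← hp]
          field_simp
          rfl
        have hy1 : (⟪z, X η⟫_ℂ : ℂ) = (q : ℂ) := by
          rw [← ContinuousLinearMap.adjoint_inner_left X, ← hA', hη, inner_smul_right,
            inner_self_eq_norm_sq_to_K, ← hq]
          field_simp
          rfl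
        have hbuz := buzano_aux z (A' ζ) (X η) hz
        rw [hx1, hy1] at hbuz
        have hxy : ‖(⟪A' ζ, X η⟫_ℂ : ℂ)‖ ≤ b := by
          have heq : (⟪A' ζ, X η⟫_ℂ : ℂ) = ⟪ζ, (X * X) η⟫_ℂ := by
            rw [hA', ContinuousLinearMap.adjoint_inner_left, ContinuousLinearMap.mul_apply]
          have hXXη : ‖(X * X) η‖ ≤ b := by
            have h := (X * X).le_opNorm η
            rw [hη1, mul_one] at h
            exact h
          rw [heq]
          calc ‖(⟪ζ, (X * X) η⟫_ℂ : ℂ)‖ ≤ ‖ζ‖ * ‖(X * X) η‖ := norm_inner_le_norm _ _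
            _ = ‖(X * X) η‖ := by rw [hζ1, one_mul]
            _ ≤ b := hXXη
        have hxn : ‖A' ζ‖ ≤ a := by
          calc ‖A' ζ‖ ≤ ‖A'‖ * ‖ζ‖ := A'.le_opNorm ζ
            _ = a := by rw [hA'norm, hζ1, mul_one]
        have hyn : ‖X η‖ ≤ a := by
          calc ‖X η‖ ≤ ‖X‖ * ‖η‖ := X.le_opNorm η
            _ = a := by rw [← ha, hη1, mul_one]
        have hpq : ‖((p : ℂ)) * ((q : ℂ))‖ = p * q := by
          rw [norm_mul, Complex.norm_real, Complex.norm_real,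
            Real.norm_of_nonneg hp0, Real.norm_of_nonneg hq0]
        rw [hpq] at hbuz
        have : ‖A' ζ‖ * ‖X η‖ ≤ a * a :=
          mul_le_mul hxn hyn (norm_nonneg _) ha0
        linarith
    -- step B : decomposition identity
    set u : H := X z - μ • z with hu
    set v : H := A' z - (starRingEnd ℂ μ) • z with hv
    have hzu : (⟪z, u⟫_ℂ : ℂ) = 0 := by
      rw [hu, inner_sub_right, inner_smul_right, hzz, mul_one, ← hμ, sub_self]
    have hzv : (⟪z, v⟫_ℂ : ℂ) = 0 := by
      rw [hv, inner_sub_right, inner_smul_right, hzz, mul_one]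
      rw [← inner_conj_symm z (A' z), hAz, sub_self]
    have hident : (⟪v, u⟫_ℂ : ℂ) = ⟪z, (X * X) z⟫_ℂ - μ ^ 2 := by
      have hXXz : (⟪A' z, X z⟫_ℂ : ℂ) = ⟪z, (X * X) z⟫_ℂ := by
        rw [hA', ContinuousLinearMap.adjoint_inner_left, ContinuousLinearMap.mul_apply]
      have hzXz : (⟪z, X z⟫_ℂ : ℂ) = μ := hμ.symm
      rw [hv, hu]
      rw [inner_sub_left, inner_sub_right, inner_sub_right,
        inner_smul_left, inner_smul_left, inner_smul_right, inner_smul_right,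
        hzz, hXXz, hAz, hzXz, Complex.conj_conj]
      ring
    have hbineq : ‖(⟪z, (X * X) z⟫_ℂ : ℂ)‖ ≤ b := by
      have hXXz' : ‖(X * X) z‖ ≤ b := by
        have h := (X * X).le_opNorm z
        rw [hz, mul_one] at h
        exact h
      calc ‖(⟪z, (X * X) z⟫_ℂ : ℂ)‖ ≤ ‖z‖ * ‖(X * X) z‖ := norm_inner_le_norm _ _
        _ = ‖(X * X) z‖ := by rw [hz, one_mul]
        _ ≤ b := hXXz'
    have hstepB : l ^ 2 ≤ b + ‖v‖ * ‖u‖ := by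
      have : μ ^ 2 = ⟪z, (X * X) z⟫_ℂ - ⟪v, u⟫_ℂ := by rw [hident]; ring
      calc l ^ 2 = ‖μ ^ 2‖ := by rw [norm_pow, hlμ]
        _ = ‖(⟪z, (X * X) z⟫_ℂ : ℂ) - ⟪v, u⟫_ℂ‖ := by rw [this]
        _ ≤ ‖(⟪z, (X * X) z⟫_ℂ : ℂ)‖ + ‖(⟪v, u⟫_ℂ : ℂ)‖ := norm_sub_le _ _
        _ ≤ b + ‖v‖ * ‖u‖ := add_le_add hbineq (norm_inner_le_norm _ _)
    -- Pythagoras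
    have hupyth : ‖u‖ ^ 2 = p ^ 2 - l ^ 2 := by
      have hXzd : X z = μ • z + u := by rw [hu]; abel
      have horth : (⟪μ • z, u⟫_ℂ : ℂ) = 0 := by
        rw [inner_smul_left, hzu, mul_zero]
      have := norm_add_sq_eq_norm_sq_add_norm_sq_of_inner_eq_zero (μ • z) u horth
      rw [← hXzd] at this
      rw [← hp] at this
      have hμz : ‖μ • z‖ = l := by rw [norm_smul, hz, mul_one, hlμ]
      rw [hμz] at this
      linarith
    have hvpyth : ‖v‖ ^ 2 = q ^ 2 - l ^ 2 := by
      have hAzd : A' z = (starRingEnd ℂ μ) • z + v := by rw [hv]; abel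
      have horth : (⟪(starRingEnd ℂ μ) • z, v⟫_ℂ : ℂ) = 0 := by
        rw [inner_smul_left, hzv, mul_zero]
      have := norm_add_sq_eq_norm_sq_add_norm_sq_of_inner_eq_zero ((starRingEnd ℂ μ) • z) v horth
      rw [← hAzd, ← hq] at this
      have hμz : ‖(starRingEnd ℂ μ) • z‖ = l := by
        rw [norm_smul, hz, mul_one, RCLike.norm_conj, hlμ]
      rw [hμz] at this
      linarith
    have hlp : l ≤ p := by
      calc l ≤ ‖X z‖ * ‖z‖ := norm_inner_le_norm _ _
        _ = p := by rw [hz, mul_one]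
    have hlq : l ≤ q := by
      have : l = ‖(⟪A' z, z⟫_ℂ : ℂ)‖ := by rw [hAz, hlμ]
      rw [this]
      calc ‖(⟪A' z, z⟫_ℂ : ℂ)‖ ≤ ‖A' z‖ * ‖z‖ := norm_inner_le_norm _ _
        _ = q := by rw [hz, mul_one]
    -- combine
    have hu0 : 0 ≤ ‖u‖ := norm_nonneg _
    have hv0 : 0 ≤ ‖v‖ := norm_nonneg _
    have hpql : 0 ≤ p * q - l ^ 2 := by nlinarith [mul_le_mul hlp hlq hl0 hp0]
    have hsq : (‖v‖ * ‖u‖) ^ 2 ≤ (p * q - l ^ 2) ^ 2 := by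
      rw [mul_pow, hupyth, hvpyth]
      nlinarith [mul_nonneg (sq_nonneg l) (sq_nonneg (p - q))]
    have huv : ‖v‖ * ‖u‖ ≤ p * q - l ^ 2 := by
      have h := Real.sqrt_le_sqrt hsq
      rwa [Real.sqrt_sq (mul_nonneg hv0 hu0), Real.sqrt_sq hpql] at h
    have h4l : 4 * l ^ 2 ≤ a * a + 3 * b := by linarith
    have h2ls : (2 * l) ^ 2 ≤ (a + s) ^ 2 := by
      nlinarith [h4l, hs2, mul_nonneg hs0 (sub_nonneg.2 hsa)]
    have h0as : (0 : ℝ) ≤ a + s := by linarith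
    have hfin : 2 * l ≤ a + s := by
      have h := Real.sqrt_le_sqrt h2ls
      rwa [Real.sqrt_sq (by linarith : (0:ℝ) ≤ 2 * l), Real.sqrt_sq h0as] at h
    linarith
  rw [numRad]
  apply Real.iSup_le
  · rintro ⟨z, hz⟩
    exact key z hz
  · positivity
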